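/- Let N be odd, ζ = exp(2πi/N), and x ∈ ℂ with x^N ≠ 1. Then Σ_{j=0}^{N-1} ζ^j/(1 - xζ^j) = N·x^{N-1}/(1 - x^N). Consequently, f(x, xζ^{-1} | ζ) := Σ_{s=0}^{N-1} ∏_{j=1}^{s} ((1-xζ^{j-1})/(1-xζ^j)) ζ^s = N x^{N-1}(1-x)/(1-x^N). -/

import Mathlib

open Complex Real

/-- For `N` odd, `ζ = exp(2πi/N)` and `x^N ≠ 1`:
`Σ_{j=0}^{N-1} ζ^j/(1-xζ^j) = N·x^{N-1}/(1-x^N)`, and consequently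
`f(x, xζ^{-1} | ζ) = Σ_{s=0}^{N-1} ∏_{j=1}^{s} ((1-xζ^{j-1})/(1-xζ^j)) ζ^s
  = N·x^{N-1}(1-x)/(1-x^N)`. -/
theorem sum_zeta_over_one_sub (N : ℕ) (hN : Odd N)
    (ζ : ℂ) (hζ : ζ = Complex.exp (2 * π * Complex.I / N))
    (x : ℂ) (hx : x ^ N ≠ 1) :
    (∑ j ∈ Finset.range N, ζ ^ j / (1 - x * ζ ^ j)) =
      (N : ℂ) * x ^ (N - 1) / (1 - x ^ N) ∧
    (∑ s ∈ Finset.range N,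
        (∏ j ∈ Finset.range s, (1 - x * ζ ^ j) / (1 - x * ζ ^ (j + 1))) * ζ ^ s) =
      (N : ℂ) * x ^ (N - 1) * (1 - x) / (1 - x ^ N) := by
  have hN0 : N ≠ 0 := hN.pos.ne'
  have hprim : IsPrimitiveRoot ζ N := by
    rw [hζ]; exact Complex.isPrimitiveRoot_exp N hN0
  have hζN : ζ ^ N = 1 := hprim.pow_eq_one
  have hnz : ∀ j : ℕ, 1 - x * ζ ^ j ≠ 0 := by
    intro j h
    apply hx
    have h1 : (1 : ℂ) = x * ζ ^ j := sub_eq_zero.mp h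
    calc x ^ N = x ^ N * ((ζ ^ N) ^ j) := by rw [hζN, one_pow, mul_one]
      _ = (x * ζ ^ j) ^ N := by rw [mul_pow, ← pow_mul, ← pow_mul, Nat.mul_comm]
      _ = 1 := by rw [← h1, one_pow]
  have hxN : 1 - x ^ N ≠ 0 := sub_ne_zero.mpr (Ne.symm hx)
  -- geometric sums of powers of ζ
  have geom : ∀ k ∈ Finset.range N,
      (∑ j ∈ Finset.range N, (ζ ^ (k + 1)) ^ j) = if k = N - 1 then (N : ℂ) else 0 := by
    intro k hk
    rw [Finset.mem_range] at hk
    by_cases hkN : k = N - 1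
    · subst hkN
      have hk1 : N - 1 + 1 = N := by omega
      rw [if_pos rfl, hk1, hζN]
      simp
    · rw [if_neg hkN]
      have hlt : k + 1 < N := by omega
      have hne : ζ ^ (k + 1) ≠ 1 := hprim.pow_ne_one_of_pos_of_lt (Nat.succ_ne_zero k) hlt
      have hNpow : (ζ ^ (k + 1)) ^ N = 1 := by
        rw [← pow_mul, Nat.mul_comm, pow_mul, hζN, one_pow]
      have := geom_sum_mul (ζ ^ (k + 1)) N
      rw [hNpow, sub_self] at this
      rcases mul_eq_zero.mp this with h | h
      · exact h
      · exact absurd (sub_eq_zero.mp h) hne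
  -- key: first sum times (1 - x^N)
  have key : (∑ j ∈ Finset.range N, ζ ^ j / (1 - x * ζ ^ j)) * (1 - x ^ N)
      = (N : ℂ) * x ^ (N - 1) := by
    rw [Finset.sum_mul]
    have step : ∀ j ∈ Finset.range N,
        ζ ^ j / (1 - x * ζ ^ j) * (1 - x ^ N)
          = ∑ k ∈ Finset.range N, x ^ k * (ζ ^ (k + 1)) ^ j := by
      intro j _
      have hgeo := geom_sum_mul (x * ζ ^ j) N
      have hpow : (x * ζ ^ j) ^ N = x ^ N := by
        rw [mul_pow, ← pow_mul, Nat.mul_comm, pow_mul, hζN, one_pow, mul_one]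
      have h1 : 1 - x ^ N = (1 - x * ζ ^ j) * ∑ i ∈ Finset.range N, (x * ζ ^ j) ^ i := by
        rw [← hpow]; linear_combination hgeo
      rw [h1, div_mul_eq_mul_div, mul_div_assoc, mul_div_cancel_left₀ _ (hnz j),
        Finset.mul_sum]
      refine Finset.sum_congr rfl fun k _ => ?_
      rw [mul_pow, ← pow_mul, ← pow_mul, show (k + 1) * j = j + j * k by ring, pow_add]
      ring
    rw [Finset.sum_congr rfl step, Finset.sum_comm]
    have : ∀ k ∈ Finset.range N,
        (∑ j ∈ Finset.range N, x ^ k * (ζ ^ (k + 1)) ^ j)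
          = if k = N - 1 then (N : ℂ) * x ^ (N - 1) else 0 := by
      intro k hk
      rw [← Finset.mul_sum, geom k hk]
      by_cases h : k = N - 1
      · subst h; rw [if_pos rfl, if_pos rfl]; ring
      · rw [if_neg h, if_neg h, mul_zero]
    rw [Finset.sum_congr rfl this, Finset.sum_ite_eq' (Finset.range N) (N - 1)
      (fun _ => (N : ℂ) * x ^ (N - 1)), if_pos (Finset.mem_range.mpr (by omega))]
  have first : (∑ j ∈ Finset.range N, ζ ^ j / (1 - x * ζ ^ j)) =
      (N : ℂ) * x ^ (N - 1) / (1 - x ^ N) := by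
    rw [eq_div_iff hxN]
    linear_combination key
  refine ⟨first, ?_⟩
  have tele : ∀ s : ℕ,
      (∏ j ∈ Finset.range s, (1 - x * ζ ^ j) / (1 - x * ζ ^ (j + 1)))
        = (1 - x) / (1 - x * ζ ^ s) := by
    intro s
    induction s with
    | zero =>
        have h0 := hnz 0
        rw [pow_zero, mul_one] at h0
        simp [div_self h0]
    | succ n ih =>
        rw [Finset.prod_range_succ, ih, div_mul_div_comm,
          mul_comm (1 - x) (1 - x * ζ ^ n), mul_div_mul_left _ _ (hnz n)]
  have : (∑ s ∈ Finset.range N,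
        (∏ j ∈ Finset.range s, (1 - x * ζ ^ j) / (1 - x * ζ ^ (j + 1))) * ζ ^ s)
      = (1 - x) * ∑ j ∈ Finset.range N, ζ ^ j / (1 - x * ζ ^ j) := by
    rw [Finset.mul_sum]
    refine Finset.sum_congr rfl fun s _ => ?_
    rw [tele s]
    field_simp
  rw [this, first]
  ring
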